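/- For integers r ≥ 3+b (with b ≥ 0), j ≥ 1, and all n ≥ 0, p^{r−(3+b)}_{j−1}(n) = Σ_{s=0}^{n} C(n,s) p^r_j(s) · (−1)^{n−s} (2(3+b)^{n−s} − (2+b)^{n−s}). -/

import Mathlib

open Finset

lemma summable_base (k : ℕ) : Summable (fun s : ℕ => ((s:ℝ)+1)^k * (1/2)^s) := by
  have h : Summable (fun s : ℕ => ((s:ℝ))^k * (1/2:ℝ)^s) :=
    summable_pow_mul_geometric_of_norm_lt_one k (by rw [Real.norm_eq_abs, abs_of_pos] <;> norm_num)
  have h2 := ((summable_nat_add_iff 1).2 h).mul_left (2:ℝ)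
  refine h2.congr fun s => ?_
  push_cast
  ring

lemma choose_bound (c s : ℕ) : (c + s - 1).choose s ≤ ((c + 1) * (s + 1)) ^ c := by
  match c with
  | 0 =>
    match s with
    | 0 => simp
    | s+1 =>
      rw [Nat.choose_eq_zero_of_lt (by omega)]
      exact Nat.zero_le _
  | c+1 =>
    have h0 : c + 1 + s - 1 = c + s := by omega
    have h1 : (c + s).choose s = (c + s).choose c := by
      have := Nat.choose_symm (show c ≤ c + s by omega)
      simpa using this
    have h2 : (c + s).choose c ≤ (c + s) ^ c := Nat.choose_le_pow _ _
    calc (c + 1 + s - 1).choose s = (c + s).choose c := by rw [h0, h1]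
      _ ≤ (c + s) ^ c := h2
      _ ≤ ((c + 2) * (s + 1)) ^ c := Nat.pow_le_pow_left (by nlinarith) _
      _ ≤ ((c + 2) * (s + 1)) ^ (c + 1) := Nat.pow_le_pow_right (by positivity) (by omega)

lemma summable_p (c d e n : ℕ) :
    Summable (fun s : ℕ => ((c + s - 1).choose s : ℝ) * ((e + s : ℕ) : ℝ) ^ n / 2 ^ (d + s)) := by
  refine Summable.of_nonneg_of_le

    (fun s => by positivity) ?_ ((summable_base (c+n)).mul_left ((((c:ℝ)+1)^c * ((e:ℝ)+1)^n)))
  intro s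
  have h1 : ((c + s - 1).choose s : ℝ) ≤ ((c:ℝ)+1)^c * ((s:ℝ)+1)^c := by
    calc ((c + s - 1).choose s : ℝ) ≤ (((c + 1) * (s + 1) : ℕ) : ℝ) ^ c := by
          exact_mod_cast choose_bound c s
      _ = ((c:ℝ)+1)^c * ((s:ℝ)+1)^c := by push_cast; rw [mul_pow]
  have h2 : ((e + s : ℕ):ℝ)^n ≤ ((e:ℝ)+1)^n * ((s:ℝ)+1)^n := by
    calc ((e + s : ℕ):ℝ)^n ≤ (((e+1)*(s+1) : ℕ):ℝ)^n := by
          apply pow_le_pow_left₀ (by positivity)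
          exact_mod_cast (by nlinarith : e + s ≤ (e+1)*(s+1))
      _ = ((e:ℝ)+1)^n * ((s:ℝ)+1)^n := by push_cast; rw [mul_pow]
  have h3 : (1:ℝ) / 2 ^ (d + s) ≤ (1/2)^s := by
    rw [div_pow, one_pow]
    apply div_le_div_of_nonneg_left (by norm_num) (by positivity)
    exact pow_le_pow_right₀ (by norm_num) (by omega)
  calc ((c + s - 1).choose s : ℝ) * ((e + s : ℕ):ℝ)^n / 2^(d+s)
      = ((c + s - 1).choose s : ℝ) * ((e + s : ℕ):ℝ)^n * (1 / 2^(d+s)) := by ring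
    _ ≤ (((c:ℝ)+1)^c * ((s:ℝ)+1)^c) * (((e:ℝ)+1)^n * ((s:ℝ)+1)^n) * (1/2)^s := by
        apply mul_le_mul (mul_le_mul h1 h2 (by positivity) (by positivity)) h3 (by positivity)
        positivity
    _ = (((c:ℝ)+1)^c * ((e:ℝ)+1)^n) * (((s:ℝ)+1)^(c+n) * (1/2)^s) := by ring



/-- `p r j n` : the number of restricted barred preferential arrangements of an `n`-set with
`r` restricted sections and `j` free sections, given by the convergent series
`p^r_j(n) = \sum_{s=0}^\infty C(j+s-1, s) (r+s)^n / 2^(j+s)`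
(the coefficient of `m^n/n!` in `e^{rm}/(2-e^m)^j`). -/
noncomputable def p (r j n : ℕ) : ℝ :=
  ∑' s : ℕ, ((j + s - 1).choose s : ℝ) * ((r + s : ℕ) : ℝ) ^ n / 2 ^ (j + s)

theorem stmt16 (b r j : ℕ) (hr : 3 + b ≤ r) (hj : 1 ≤ j) (n : ℕ) :
    p (r - (3 + b)) (j - 1) n = ∑ s ∈ Finset.range (n + 1),
      (n.choose s : ℝ) * p r j s * (-1) ^ (n - s) *
        (2 * ((3 : ℝ) + b) ^ (n - s) - ((2 : ℝ) + b) ^ (n - s)) := by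
  obtain ⟨a, rfl⟩ : ∃ a, r = a + (3 + b) := ⟨r - (3 + b), by omega⟩
  obtain ⟨j, rfl⟩ : ∃ j', j = j' + 1 := ⟨j - 1, by omega⟩
  have hra : a + (3 + b) - (3 + b) = a := by omega
  have hj1 : j + 1 - 1 = j := by omega
  rw [hra, hj1]
  set W : ℕ → ℝ := fun t => ((j + t).choose t : ℝ) / 2 ^ (j + 1 + t) with hW
  set G : ℕ → ℝ := fun t =>
    Nat.casesOn t 0 (fun u => W u * ((a + 1 + u : ℕ) : ℝ) ^ n) with hG
  set F : ℕ → ℝ := fun t => ((j + t - 1).choose t : ℝ) * ((a + t : ℕ) : ℝ) ^ n / 2 ^ (j + t)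
    with hF
  -- summabilities
  have hsumW : ∀ (e m : ℕ), Summable (fun t : ℕ => W t * ((e + t : ℕ) : ℝ) ^ m) := by
    intro e m
    refine (summable_p (j+1) (j+1) e m).congr fun t => ?_
    have h1 : j + 1 + t - 1 = j + t := by omega
    rw [h1, hW]
    ring
  have hsumF : Summable F := summable_p j j a n
  have hsumG : Summable G := by
    refine (summable_nat_add_iff 1).mp ?_
    exact (hsumW (a+1) n).congr fun t => rfl
  -- pointwise Pascal identity
  have claim1 : ∀ t, 2 * (W t * ((a + t : ℕ) : ℝ) ^ n) = F t + G t := by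
    intro t
    cases t with
    | zero =>
      have hG0 : G 0 = 0 := rfl
      rw [hG0]
      simp only [hW, hF]
      have h1 : j + 1 + 0 = j + 0 + 1 := by omega
      rw [h1, pow_succ]
      simp only [Nat.choose_zero_right, Nat.add_zero]
      push_cast
      ring
    | succ u =>
      have hp : (j + (u+1)).choose (u+1) = (j + u).choose u + (j + u).choose (u+1) := by
        have : j + (u+1) = (j + u) + 1 := by omega
        rw [this, Nat.choose_succ_succ]
      have hF1 : j + (u+1) - 1 = j + u := by omega
      simp only [hW, hF, hG, hF1, hp]
      have hc : ((a + 1 + u : ℕ) : ℝ) = ((a + (u+1) : ℕ) : ℝ) := by push_cast; ring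
      rw [hc]
      have h2a : j + 1 + (u+1) = (j + 1 + u) + 1 := by omega
      have h2b : j + (u+1) = j + 1 + u := by omega
      rw [h2a, h2b, pow_succ]
      push_cast
      ring
  set C : ℕ → ℝ := fun s => (n.choose s : ℝ) *
    ((-1)^(n-s) * (2*((3:ℝ)+b)^(n-s) - ((2:ℝ)+b)^(n-s))) with hC
  have binom : ∀ (x y : ℝ), ∑ s ∈ range (n+1),
      (n.choose s : ℝ) * x^s * (-1)^(n-s) * y^(n-s) = (x - y)^n := by
    intro x y
    rw [sub_eq_add_neg, add_pow]
    refine Finset.sum_congr rfl fun s hs => ?_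
    rw [neg_pow]
    ring
  have pW : ∀ s, p (a+(3+b)) (j+1) s = ∑' t : ℕ, W t * ((a+(3+b)+t : ℕ):ℝ)^s := by
    intro s
    rw [p]
    refine tsum_congr fun t => ?_
    have h1 : j + 1 + t - 1 = j + t := by omega
    rw [h1, hW]
    ring
  have step1 : ∀ s ∈ range (n+1), (n.choose s : ℝ) * p (a+(3+b)) (j+1) s * (-1)^(n-s) *
      (2*((3:ℝ)+b)^(n-s) - ((2:ℝ)+b)^(n-s)) =
      ∑' t : ℕ, (W t * ((a+(3+b)+t : ℕ):ℝ)^s) * C s := by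
    intro s _
    rw [tsum_mul_right, ← pW s, hC]
    ring
  rw [Finset.sum_congr rfl step1,
    ← Summable.tsum_finsetSum (fun s _ => ((hsumW (a+(3+b)) s).mul_right (C s)))]
  have step2 : ∀ t : ℕ, ∑ s ∈ range (n+1), (W t * ((a+(3+b)+t : ℕ):ℝ)^s) * C s
      = 2 * (W t * ((a+t : ℕ):ℝ)^n) - W t * ((a+1+t : ℕ):ℝ)^n := by
    intro t
    have hx1 : ((a+(3+b)+t : ℕ):ℝ) - ((3:ℝ)+b) = ((a+t : ℕ):ℝ) := by push_cast; ring
    have hx2 : ((a+(3+b)+t : ℕ):ℝ) - ((2:ℝ)+b) = ((a+1+t : ℕ):ℝ) := by push_cast; ring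
    rw [← hx1, ← hx2, ← binom _ ((3:ℝ)+b), ← binom _ ((2:ℝ)+b)]
    simp only [Finset.mul_sum]
    rw [← Finset.sum_sub_distrib]
    refine Finset.sum_congr rfl fun s _ => ?_
    simp only [hC]
    ring
  rw [tsum_congr step2]
  have h2W : Summable (fun t : ℕ => 2 * (W t * ((a+t : ℕ):ℝ)^n)) := (hsumW a n).mul_left 2
  rw [Summable.tsum_sub h2W (hsumW (a+1) n)]
  have e1 : ∑' t : ℕ, 2 * (W t * ((a+t : ℕ):ℝ)^n) = (∑' t, F t) + ∑' t, G t := by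
    rw [tsum_congr claim1, Summable.tsum_add hsumF hsumG]
  have e2 : ∑' t : ℕ, W t * ((a+1+t : ℕ):ℝ)^n = ∑' t, G t := by
    have := Summable.tsum_eq_zero_add hsumG
    have hG0 : G 0 = 0 := rfl
    rw [hG0, zero_add] at this
    rw [← this]
  rw [e1, e2]
  have hpF : p a j n = ∑' t, F t := rfl
  rw [hpF]
  exact (add_sub_cancel_right _ _).symm
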